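/- If the base order on X is well-founded, then the Dershowitz–Manna multiset ordering on finite multisets over X is well-founded. -/
import Mathlib

/-- The Dershowitz–Manna ordering on finite multisets over a partially ordered set. -/
def DMLT {X : Type*} [PartialOrder X] [DecidableEq X] (A B : Multiset X) : Prop :=
  ∃ C D : Multiset X, C ≠ 0 ∧ C ≤ B ∧ A = B - C + D ∧ ∀ d ∈ D, ∃ c ∈ C, d < c

section aux
variable {X : Type*} [PartialOrder X]

/-- One-step multiset order: replace one element by a multiset of smaller elements. -/
def DMOneStep (A B : Multiset X) : Prop :=
  ∃ M N a, B = a ::ₘ M ∧ A = M + N ∧ ∀ y ∈ N, y < a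

lemma dm_red {a : X} {M N : Multiset X} (h : DMOneStep N (a ::ₘ M)) :
    (∃ M', DMOneStep M' M ∧ N = a ::ₘ M') ∨ (∃ K, N = M + K ∧ ∀ y ∈ K, y < a) := by
  obtain ⟨M', N', b, heq, rfl, hN'⟩ := h
  rcases (Multiset.cons_eq_cons.mp heq) with ⟨rfl, rfl⟩ | ⟨hne, K, rfl, rfl⟩
  · exact Or.inr ⟨N', rfl, hN'⟩
  · refine Or.inl ⟨K + N', ⟨K, N', b, rfl, rfl, hN'⟩, ?_⟩
    rw [Multiset.cons_add]

lemma dm_acc_add {K M : Multiset X}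
    (H : ∀ b ∈ K, ∀ M, Acc DMOneStep M → Acc DMOneStep (b ::ₘ M))
    (hM : Acc DMOneStep M) : Acc DMOneStep (M + K) := by
  induction K using Multiset.induction with
  | empty => simpa using hM
  | cons b K ih =>
    rw [Multiset.add_cons]
    exact H b (Multiset.mem_cons_self _ _) _
      (ih fun c hc => H c (Multiset.mem_cons_of_mem hc))

lemma dm_acc_cons_aux (a : X)
    (H : ∀ b, b < a → ∀ M, Acc DMOneStep M → Acc DMOneStep (b ::ₘ M)) :
    ∀ M : Multiset X, Acc DMOneStep M → Acc DMOneStep (a ::ₘ M) := by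
  intro M hM
  induction hM with
  | intro M hacc ih =>
    constructor
    intro N hN
    rcases dm_red hN with ⟨M', h1, rfl⟩ | ⟨K, rfl, hK⟩
    · exact ih M' h1
    · exact dm_acc_add (fun b hb => H b (hK b hb)) (Acc.intro M hacc)

lemma dm_acc_cons {a : X} (ha : Acc (· < ·) a) :
    ∀ M : Multiset X, Acc DMOneStep M → Acc DMOneStep (a ::ₘ M) := by
  induction ha with
  | intro a _ iha => exact dm_acc_cons_aux a fun b hb => iha b hb

lemma dm_oneStep_wf (hwf : WellFounded ((· < ·) : X → X → Prop)) :
    WellFounded (DMOneStep (X := X)) := by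
  constructor
  intro M
  induction M using Multiset.induction with
  | empty =>
    constructor
    intro N hN
    obtain ⟨M', N', b, heq, _, _⟩ := hN
    exact absurd heq.symm (Multiset.cons_ne_zero)
  | cons a M ih => exact dm_acc_cons (hwf.apply a) M ih

open Relation in
lemma dmlt_to_transGen {X : Type*} [PartialOrder X] [DecidableEq X]
    {A B : Multiset X} (h : DMLT A B) : TransGen DMOneStep A B := by
  classical
  obtain ⟨C, D, hC0, hCB, hA, hD⟩ := h
  induction C using Multiset.induction generalizing A B D with
  | empty => exact absurd rfl hC0
  | cons c C ihC =>
    have hE : B = c ::ₘ C + (B - (c ::ₘ C)) := by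
      rw [add_comm]; exact (tsub_add_cancel_of_le hCB).symm
    set E := B - (c ::ₘ C) with hEdef
    by_cases hC : C = 0
    · subst hC
      refine TransGen.single ⟨E, D, c, ?_, ?_, ?_⟩
      · rw [hE]; simp
      · exact hA
      · intro d hd
        obtain ⟨c', hc', h'⟩ := hD d hd
        simp only [Multiset.mem_cons, Multiset.notMem_zero, or_false] at hc'
        subst hc'; exact h'
    · set D₁ := D.filter (fun d => ∃ c' ∈ C, d < c') with hD₁
      set D₂ := D.filter (fun d => ¬ ∃ c' ∈ C, d < c') with hD₂
      have hDsplit : D₁ + D₂ = D := Multiset.filter_add_not _ _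
      have hD₂lt : ∀ y ∈ D₂, y < c := by
        intro y hy
        rw [hD₂, Multiset.mem_filter] at hy
        obtain ⟨c', hc', hlt⟩ := hD y hy.1
        rcases Multiset.mem_cons.mp hc' with rfl | hc'
        · exact hlt
        · exact absurd ⟨c', hc', hlt⟩ hy.2
      set Z := C + E + D₂ with hZ
      have step : DMOneStep Z B := by
        refine ⟨C + E, D₂, c, ?_, rfl, hD₂lt⟩
        rw [hE, Multiset.cons_add]
      have hCZ : C ≤ Z := by rw [hZ, add_assoc]; exact le_self_add
      have hAZ : A = Z - C + D₁ := by
        have : Z - C = E + D₂ := by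
          rw [hZ, add_assoc, add_tsub_cancel_left]
        rw [this, hA, ← hDsplit]
        ac_rfl
      have hD₁lt : ∀ d ∈ D₁, ∃ c' ∈ C, d < c' := by
        intro d hd
        rw [hD₁, Multiset.mem_filter] at hd
        exact hd.2
      exact (ihC D₁ hC hCZ hAZ hD₁lt).trans (TransGen.single step)

end aux

/-- If the base order is well-founded, so is the Dershowitz–Manna ordering. -/
theorem dmlt_wellFounded {X : Type*} [PartialOrder X] [DecidableEq X]
    (hwf : WellFounded ((· < ·) : X → X → Prop)) :
    WellFounded (DMLT (X := X)) :=
  Subrelation.wf (fun h => dmlt_to_transGen h) (dm_oneStep_wf hwf).transGen
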